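/- arXiv:2312.04981 — 4 statements merged into one kernel-verified Lean document; each statement's English description precedes it below -/
import Mathlib

section
/- Let k ∈ ℤ and let n ≥ 1 be an integer. Then for all complex numbers u_1, …, u_n, (1/(2πi)) ∮_{|w|=1} exp( w + ∑_{j=1}^n u_j/w^{2j} ) · w^{−(k+1)} dw = ∑_{m_2, …, m_n = 0}^{∞} ( ∏_{j=2}^n u_j^{m_j}/m_j! ) · g_{k + 2∑_{j=2}^n j·m_j}(u_1), where the right-hand side is an absolutely convergent multiple series (for n = 1 the statement reads that the integral equals g_k(u_1)). -/
open scoped Nat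

open Complex MeasureTheory

/-- Product over a pi type of absolutely summable families. -/
lemma hasSum_pi_prod {N : ℕ} (f : Fin N → ℕ → ℂ) (a : Fin N → ℂ)
    (hf : ∀ t, HasSum (f t) (a t)) (hf' : ∀ t, Summable fun i => ‖f t i‖) :
    HasSum (fun m : Fin N → ℕ => ∏ t, f t (m t)) (∏ t, a t) ∧
      Summable (fun m : Fin N → ℕ => ‖∏ t, f t (m t)‖) := by
  induction N with
  | zero =>
    have h1 : ∀ m : Fin 0 → ℕ, (∏ t, f t (m t)) = 1 := fun m => by simp
    constructor
    · have := hasSum_single (f := fun m : Fin 0 → ℕ => ∏ t, f t (m t)) default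
        (fun b' hb' => absurd (Subsingleton.elim b' default) hb')
      simpa [h1] using this
    · exact (hasSum_single (f := fun m : Fin 0 → ℕ => ‖∏ t, f t (m t)‖) default
        (fun b' hb' => absurd (Subsingleton.elim b' default) hb')).summable
  | succ N IH =>
    obtain ⟨IH1, IH2⟩ := IH (fun t => f t.succ) (fun t => a t.succ)
      (fun t => hf _) (fun t => hf' _)
    have key : ∀ (g : ℕ → ℂ) (h : (Fin N → ℕ) → ℂ) (cg ch : ℂ),
        HasSum g cg → HasSum h ch → Summable (fun i => ‖g i‖) →
        Summable (fun m => ‖h m‖) →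
        HasSum (fun p : ℕ × (Fin N → ℕ) => g p.1 * h p.2) (cg * ch) ∧
          Summable (fun p : ℕ × (Fin N → ℕ) => ‖g p.1 * h p.2‖) := by
      intro g h cg ch hg hh hg' hh'
      have hS := Summable.mul_norm hg' hh'
      exact ⟨hg.mul hh hS.of_norm, hS⟩
    obtain ⟨hmul, hS⟩ := key _ _ _ _ (hf 0) IH1 (hf' 0) IH2
    constructor
    · rw [← Equiv.hasSum_iff (Fin.consEquiv fun _ : Fin (N+1) => ℕ), Fin.prod_univ_succ]
      have hcomp : ((fun m : Fin (N + 1) → ℕ => ∏ t, f t (m t)) ∘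
            (Fin.consEquiv fun _ : Fin (N+1) => ℕ))
          = fun p : ℕ × (Fin N → ℕ) => f 0 p.1 * ∏ t, f t.succ (p.2 t) := by
        funext p
        simp [Fin.consEquiv, Fin.prod_univ_succ]
      rw [hcomp]
      exact hmul
    · rw [← Equiv.summable_iff (Fin.consEquiv fun _ : Fin (N+1) => ℕ)]
      have hcomp : ((fun m : Fin (N + 1) → ℕ => ‖∏ t, f t (m t)‖) ∘
            (Fin.consEquiv fun _ : Fin (N+1) => ℕ))
          = fun p : ℕ × (Fin N → ℕ) => ‖f 0 p.1 * ∏ t, f t.succ (p.2 t)‖ := by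
        funext p; simp [Fin.consEquiv, Fin.prod_univ_succ]
      rw [hcomp]
      exact hS

lemma hasSum_exp_aux (x : ℂ) : HasSum (fun n : ℕ => x ^ n / n !) (Complex.exp x) := by
  rw [Complex.exp_eq_exp_ℂ]
  exact NormedSpace.expSeries_div_hasSum_exp x

lemma summable_norm_exp_aux (x : ℂ) : Summable fun n : ℕ => ‖x ^ n / (n ! : ℂ)‖ := by
  simpa [norm_div, Complex.norm_natCast] using Real.summable_pow_div_factorial ‖x‖

lemma zpow_finset_sum {w : ℂ} (hw : w ≠ 0) {ι : Type*} (s : Finset ι) (e : ι → ℤ) :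
    w ^ (∑ t ∈ s, e t) = ∏ t ∈ s, w ^ e t := by
  classical
  induction s using Finset.induction_on with
  | empty => simp
  | insert _ _ h ih => rw [Finset.sum_insert h, Finset.prod_insert h, zpow_add₀ hw, ih]

lemma pointwise_hasSum (k : ℤ) {N : ℕ} (v : Fin N → ℂ) (u1 : ℂ) {w : ℂ} (hw : w ≠ 0) :
    HasSum (fun m : Fin N → ℕ =>
        (∏ t, v t ^ (m t) / ((m t)! : ℂ)) *
          (Complex.exp (w + u1 / w ^ 2) *
            (w ^ (k + 2 * ∑ t : Fin N, (((t : ℕ) : ℤ) + 2) * (m t : ℤ) + 1))⁻¹))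
      (Complex.exp (w + u1 / w ^ 2 + ∑ t, v t / w ^ (2 * ((t : ℕ) + 2))) *
        (w ^ (k + 1))⁻¹) := by
  set b : Fin N → ℂ := fun t => v t * w ^ (-2 * (((t : ℕ) : ℤ) + 2)) with hbdef
  have hb : ∀ t, b t = v t / w ^ (2 * ((t : ℕ) + 2)) := by
    intro t
    have h : (-2 * (((t : ℕ) : ℤ) + 2)) = -((2 * ((t : ℕ) + 2) : ℕ) : ℤ) := by push_cast; ring
    show v t * w ^ (-2 * (((t : ℕ) : ℤ) + 2)) = _
    rw [h, zpow_neg, zpow_natCast, ← div_eq_mul_inv]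
  obtain ⟨hpi, -⟩ := hasSum_pi_prod (fun t i => b t ^ i / i !) (fun t => Complex.exp (b t))
    (fun t => hasSum_exp_aux (b t)) (fun t => summable_norm_exp_aux (b t))
  have main := hpi.mul_right (Complex.exp (w + u1 / w ^ 2) * (w ^ (k + 1))⁻¹)
  have hfun : ∀ m : Fin N → ℕ,
      (∏ t, v t ^ (m t) / ((m t)! : ℂ)) *
          (Complex.exp (w + u1 / w ^ 2) *
            (w ^ (k + 2 * ∑ t : Fin N, (((t : ℕ) : ℤ) + 2) * (m t : ℤ) + 1))⁻¹)
        = (∏ t, b t ^ (m t) / ((m t)! : ℂ)) *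
            (Complex.exp (w + u1 / w ^ 2) * (w ^ (k + 1))⁻¹) := by
    intro m
    have h1 : (∏ t, b t ^ (m t) / ((m t)! : ℂ))
        = (∏ t, v t ^ (m t) / ((m t)! : ℂ)) *
            w ^ (-(2 * ∑ t : Fin N, (((t : ℕ) : ℤ) + 2) * (m t : ℤ))) := by
      have hterm : ∀ t : Fin N, b t ^ (m t) / ((m t)! : ℂ)
          = (v t ^ (m t) / ((m t)! : ℂ)) * w ^ ((-2 * (((t : ℕ) : ℤ) + 2)) * (m t : ℤ)) := by
        intro t
        show (v t * w ^ (-2 * (((t : ℕ) : ℤ) + 2))) ^ m t / _ = _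
        simp only [mul_pow]
        rw [zpow_mul w (-2 * (((t : ℕ) : ℤ) + 2)) (m t : ℤ), zpow_natCast]
        ring
      rw [Finset.prod_congr rfl (fun t _ => hterm t), Finset.prod_mul_distrib,
        ← zpow_finset_sum hw]
      congr 2
      rw [Finset.mul_sum, ← Finset.sum_neg_distrib]
      exact Finset.sum_congr rfl fun t _ => by ring
    have h2 : (w ^ (k + 2 * ∑ t : Fin N, (((t : ℕ) : ℤ) + 2) * (m t : ℤ) + 1))⁻¹
        = w ^ (-(2 * ∑ t : Fin N, (((t : ℕ) : ℤ) + 2) * (m t : ℤ))) * (w ^ (k + 1))⁻¹ := by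
      rw [← zpow_neg, ← zpow_neg, ← zpow_add₀ hw]
      congr 1
      ring
    rw [h1, h2]
    ring
  have hval : Complex.exp (w + u1 / w ^ 2 + ∑ t, v t / w ^ (2 * ((t : ℕ) + 2))) *
        (w ^ (k + 1))⁻¹
      = (∏ t, Complex.exp (b t)) * (Complex.exp (w + u1 / w ^ 2) * (w ^ (k + 1))⁻¹) := by
    rw [← Complex.exp_sum, ← mul_assoc, ← Complex.exp_add]
    congr 2
    rw [Finset.sum_congr rfl fun t _ => (hb t).symm]
    ring
  rw [funext hfun, hval]
  exact main


/-- The hypergeometric function `g_m(u) = (1/(2πi)) ∮_{|w|=1} e^{w + u/w²} w^{−(m+1)} dw`. -/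
noncomputable def gFun (m : ℤ) (u : ℂ) : ℂ :=
  (2 * (Real.pi : ℂ) * Complex.I)⁻¹ *
    ∮ w in C(0, 1), Complex.exp (w + u / w ^ 2) * (w ^ (m + 1))⁻¹

/-- for `k ∈ ℤ`, `n ≥ 1` and complex numbers `u_1, …, u_n`,
`(1/(2πi)) ∮_{|w|=1} exp(w + ∑_{j=1}^n u_j/w^{2j}) w^{−(k+1)} dw
  = ∑_{m_2,…,m_n ≥ 0} (∏_{j=2}^n u_j^{m_j}/m_j!) g_{k+2∑_{j=2}^n j m_j}(u_1)`,
the right-hand side being an (unconditionally, hence absolutely) convergent multiple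
series; for `n = 1` it reads that the integral equals `g_k(u_1)`.  The indices
`m_2, …, m_n` are encoded as `m : Fin (n-1) → ℕ`, with `t : Fin (n-1)`
corresponding to the index `j = t + 2`. -/
theorem stmt_7 (k : ℤ) (n : ℕ) (hn : 1 ≤ n) (u : ℕ → ℂ) :
    HasSum
      (fun m : Fin (n - 1) → ℕ =>
        (∏ t : Fin (n - 1), u ((t : ℕ) + 2) ^ (m t) / ((m t)! : ℂ)) *
          gFun (k + 2 * ∑ t : Fin (n - 1), (((t : ℕ) : ℤ) + 2) * (m t : ℤ)) (u 1))
      ((2 * (Real.pi : ℂ) * Complex.I)⁻¹ *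
        ∮ w in C(0, 1),
          Complex.exp (w + ∑ j ∈ Finset.Icc 1 n, u j / w ^ (2 * j)) * (w ^ (k + 1))⁻¹) := by
  obtain ⟨N, rfl⟩ : ∃ N, n = N + 1 := ⟨n - 1, (Nat.succ_pred_eq_of_pos hn).symm⟩
  simp only [Nat.add_sub_cancel, Nat.succ_sub_one]
  have hφ : ∀ θ : ℝ, circleMap 0 1 θ ≠ 0 := fun θ h =>
    one_ne_zero (circleMap_eq_center_iff.mp h)
  have h2π : (0 : ℝ) ≤ 2 * Real.pi := by positivity
  set μ : Measure ℝ := volume.restrict (Set.Ioc 0 (2 * Real.pi)) with hμ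
  set F : (Fin N → ℕ) → ℝ → ℂ := fun m θ =>
    (∏ t : Fin N, u ((t : ℕ) + 2) ^ (m t) / ((m t)! : ℂ)) *
      ((circleMap 0 1 θ * Complex.I) *
        (Complex.exp (circleMap 0 1 θ + u 1 / circleMap 0 1 θ ^ 2) *
          (circleMap 0 1 θ ^
            (k + 2 * ∑ t : Fin N, (((t : ℕ) : ℤ) + 2) * (m t : ℤ) + 1))⁻¹)) with hF
  have hFfun : ∀ m, F m = fun θ =>
      (∏ t : Fin N, u ((t : ℕ) + 2) ^ (m t) / ((m t)! : ℂ)) *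
        ((circleMap 0 1 θ * Complex.I) *
          (Complex.exp (circleMap 0 1 θ + u 1 / circleMap 0 1 θ ^ 2) *
            (circleMap 0 1 θ ^
              (k + 2 * ∑ t : Fin N, (((t : ℕ) : ℤ) + 2) * (m t : ℤ) + 1))⁻¹)) :=
    fun m => rfl
  have hφc : Continuous (circleMap 0 1) := continuous_circleMap 0 1
  have hexp_cont :
      Continuous fun θ => Complex.exp (circleMap 0 1 θ + u 1 / circleMap 0 1 θ ^ 2) :=
    Complex.continuous_exp.comp (hφc.add
      (continuous_const.div₀ (hφc.pow 2) fun θ => pow_ne_zero 2 (hφ θ)))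
  have hcont : ∀ m, Continuous (F m) := by
    intro m
    rw [hFfun]
    exact continuous_const.mul ((hφc.mul continuous_const).mul (hexp_cont.mul
      ((hφc.zpow₀ _ fun θ => Or.inl (hφ θ)).inv₀ fun θ => zpow_ne_zero _ (hφ θ))))
  have hInt : ∀ m, Integrable (F m) μ := fun m => (hcont m).integrableOn_Ioc
  set A := Real.exp (1 + ‖u 1‖) with hA
  have hexp_bound : ∀ θ : ℝ,
      ‖Complex.exp (circleMap 0 1 θ + u 1 / circleMap 0 1 θ ^ 2)‖ ≤ A := by
    intro θ
    rw [Complex.norm_exp, hA]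
    apply Real.exp_le_exp.2
    calc (circleMap 0 1 θ + u 1 / circleMap 0 1 θ ^ 2).re
        ≤ ‖circleMap 0 1 θ + u 1 / circleMap 0 1 θ ^ 2‖ := Complex.re_le_norm _
      _ ≤ ‖circleMap 0 1 θ‖ + ‖u 1 / circleMap 0 1 θ ^ 2‖ :=
          norm_add_le _ _
      _ = 1 + ‖u 1‖ := by
          rw [norm_div, norm_pow, norm_circleMap_zero]
          norm_num
  have hbound : ∀ (m : Fin N → ℕ) (θ : ℝ), ‖F m θ‖ ≤
      ‖∏ t : Fin N, u ((t : ℕ) + 2) ^ (m t) / ((m t)! : ℂ)‖ * A := by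
    intro m θ
    rw [hFfun]
    simp only [norm_mul, norm_circleMap_zero, norm_I, norm_inv,
      norm_zpow, abs_one, one_zpow, inv_one, mul_one, one_mul]
    exact mul_le_mul_of_nonneg_left (hexp_bound θ) (norm_nonneg _)
  obtain ⟨-, hcsum⟩ := hasSum_pi_prod (fun t i => u ((t : ℕ) + 2) ^ i / (i ! : ℂ))
    (fun t => Complex.exp (u ((t : ℕ) + 2))) (fun t => hasSum_exp_aux _)
    (fun t => summable_norm_exp_aux _)
  have hFsum : Summable fun m : Fin N → ℕ => ∫ θ, ‖F m θ‖ ∂μ := by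
    refine Summable.of_nonneg_of_le (fun m => integral_nonneg fun θ => norm_nonneg _)
      (fun m => ?_) (hcsum.mul_right (A * (2 * Real.pi)))
    have hle : ∫ θ, ‖F m θ‖ ∂μ ≤
        ∫ _θ, (‖∏ t : Fin N, u ((t : ℕ) + 2) ^ (m t) / ((m t)! : ℂ)‖ * A) ∂μ := by
      rw [hμ]
      exact setIntegral_mono_on ((hInt m).norm)
        (integrableOn_const measure_Ioc_lt_top.ne) measurableSet_Ioc
        fun θ _ => hbound m θ
    refine hle.trans ?_
    rw [hμ, setIntegral_const, measureReal_def, Real.volume_Ioc, smul_eq_mul,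
      ENNReal.toReal_ofReal (by linarith)]
    apply le_of_eq
    ring
  have H := (hasSum_integral_of_summable_integral_norm hInt hFsum).mul_left
    ((2 * (Real.pi : ℂ) * Complex.I)⁻¹)
  have hIcc : ∀ w : ℂ, ∑ j ∈ Finset.Icc 1 (N + 1), u j / w ^ (2 * j)
      = u 1 / w ^ 2 + ∑ t : Fin N, u ((t : ℕ) + 2) / w ^ (2 * ((t : ℕ) + 2)) := by
    intro w
    rw [← Finset.Ico_add_one_right_eq_Icc, Finset.sum_Ico_eq_sum_range]
    have h : N + 1 + 1 - 1 = N + 1 := by omega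
    rw [h, Finset.sum_range_succ',
      Fin.sum_univ_eq_sum_range fun i => u (i + 2) / w ^ (2 * (i + 2))]
    have h1 : ∀ i : ℕ, u (1 + (i + 1)) / w ^ (2 * (1 + (i + 1)))
        = u (i + 2) / w ^ (2 * (i + 2)) := by
      intro i
      have : 1 + (i + 1) = i + 2 := by omega
      rw [this]
    rw [Finset.sum_congr rfl fun i _ => h1 i, add_comm]
  have htsum : ∀ θ : ℝ, ∑' m : Fin N → ℕ, F m θ
      = (circleMap 0 1 θ * Complex.I) *
          (Complex.exp (circleMap 0 1 θ +
              ∑ j ∈ Finset.Icc 1 (N + 1), u j / circleMap 0 1 θ ^ (2 * j)) *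
            (circleMap 0 1 θ ^ (k + 1))⁻¹) := by
    intro θ
    have hp := pointwise_hasSum k (fun t : Fin N => u ((t : ℕ) + 2)) (u 1) (hφ θ)
    have hp2 := hp.mul_left (circleMap 0 1 θ * Complex.I)
    have hfe : (fun m : Fin N → ℕ => F m θ) = fun m =>
        (circleMap 0 1 θ * Complex.I) *
          ((∏ t : Fin N, u ((t : ℕ) + 2) ^ (m t) / ((m t)! : ℂ)) *
            (Complex.exp (circleMap 0 1 θ + u 1 / circleMap 0 1 θ ^ 2) *
              (circleMap 0 1 θ ^
                (k + 2 * ∑ t : Fin N, (((t : ℕ) : ℤ) + 2) * (m t : ℤ) + 1))⁻¹)) := by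
      funext m
      rw [hFfun]
      ring
    rw [hfe, hp2.tsum_eq, hIcc (circleMap 0 1 θ), ← add_assoc]
  have hval : (∮ w in C(0, 1),
        Complex.exp (w + ∑ j ∈ Finset.Icc 1 (N + 1), u j / w ^ (2 * j)) * (w ^ (k + 1))⁻¹)
      = ∫ θ, (∑' m : Fin N → ℕ, F m θ) ∂μ := by
    simp only [circleIntegral, deriv_circleMap, smul_eq_mul]
    rw [intervalIntegral.integral_of_le h2π, hμ]
    exact integral_congr_ae (Filter.Eventually.of_forall fun θ => by beta_reduce; rw [htsum θ]; try ring)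
  have hterm : ∀ m : Fin N → ℕ,
      (2 * (Real.pi : ℂ) * Complex.I)⁻¹ * ∫ θ, F m θ ∂μ
        = (∏ t : Fin N, u ((t : ℕ) + 2) ^ (m t) / ((m t)! : ℂ)) *
            gFun (k + 2 * ∑ t : Fin N, (((t : ℕ) : ℤ) + 2) * (m t : ℤ)) (u 1) := by
    intro m
    simp only [gFun]
    have h1 : ∫ θ, F m θ ∂μ
        = (∏ t : Fin N, u ((t : ℕ) + 2) ^ (m t) / ((m t)! : ℂ)) *
            ∮ w in C(0, 1), Complex.exp (w + u 1 / w ^ 2) *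
              (w ^ ((k + 2 * ∑ t : Fin N, (((t : ℕ) : ℤ) + 2) * (m t : ℤ)) + 1))⁻¹ := by
      simp only [circleIntegral, deriv_circleMap, smul_eq_mul]
      rw [intervalIntegral.integral_of_le h2π, ← integral_const_mul, hμ]
      all_goals exact integral_congr_ae (Filter.Eventually.of_forall fun θ => by beta_reduce; rw [hFfun]; try ring)
    rw [h1]
    try ring
  have hfun2 : (fun m : Fin N → ℕ =>
      (2 * (Real.pi : ℂ) * Complex.I)⁻¹ * ∫ θ, F m θ ∂μ)
      = fun m : Fin N → ℕ =>
        (∏ t : Fin N, u ((t : ℕ) + 2) ^ (m t) / ((m t)! : ℂ)) *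
          gFun (k + 2 * ∑ t : Fin N, (((t : ℕ) : ℤ) + 2) * (m t : ℤ)) (u 1) :=
    funext hterm
  rw [hfun2, ← hval] at H
  exact H
end

section
/- Let n ≥ 0 and k ≥ 1 be integers, let N ∈ ℂ, and let w_1, …, w_k be nonzero complex numbers. Then the n-th derivative at α = 0 of the function α ↦ e^{−Nα} / ∏_{i=1}^k (w_i² − α²) equals ( ∏_{i=1}^k w_i^{−2} ) · ∑_{m=0}^n (n choose m) · (−N)^{n−m} · m! · ∑_{l_1 + ⋯ + l_k = m, each l_j even} ∏_{i=1}^k w_i^{−l_i}, where the inner sum is over all tuples (l_1, …, l_k) of non-negative even integers summing to m. -/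
open scoped Nat


open Finset

noncomputable def sqS (k m : ℕ) (w : Fin k → ℂ) : ℂ :=
  ∑ l ∈ (Finset.Nat.antidiagonalTuple k m).filter fun l => ∀ i, Even (l i),
    ∏ i, (w i ^ (l i))⁻¹

lemma aux_summable (K : ℕ) {x : ℝ} (h0 : 0 ≤ x) (h1 : x < 1) :
    Summable fun m : ℕ => ((m : ℝ) + 1) ^ K * x ^ m := by
  have h := summable_pow_mul_geometric_of_norm_lt_one (R := ℝ) K
    (r := x) (by rwa [Real.norm_eq_abs, abs_of_nonneg h0])
  have hind : Summable fun m : ℕ => if m = 0 then (1 : ℝ) else 0 :=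
    summable_of_ne_finset_zero (s := {0}) (fun m hm => by
      simp only [Finset.mem_singleton] at hm; simp [hm])
  refine Summable.of_nonneg_of_le (fun m => by positivity)
    (fun m => ?_) ((h.mul_left ((2:ℝ) ^ K)).add hind)
  rcases Nat.eq_zero_or_pos m with rfl | hm
  · simp
  · have h2 : ((m : ℝ) + 1) ^ K ≤ (2 : ℝ) ^ K * (m : ℝ) ^ K := by
      rw [← mul_pow]
      apply pow_le_pow_left₀ (by positivity)
      have : (1 : ℝ) ≤ (m : ℝ) := by exact_mod_cast hm
      linarith
    have := mul_le_mul_of_nonneg_right h2 (pow_nonneg h0 m)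
    simp only [if_neg (Nat.pos_iff_ne_zero.1 hm)]
    calc ((m:ℝ)+1)^K * x^m ≤ 2^K * (m:ℝ)^K * x^m := this
      _ = 2^K * ((m:ℝ)^K * x^m) + 0 := by ring
      _ ≤ _ := le_refl _

lemma norm_sqS_le (k m : ℕ) (w : Fin k → ℂ) {r : ℝ} (hr : 0 < r)
    (hw : ∀ i, r ≤ ‖w i‖) :
    ‖sqS k m w‖ ≤ ((m : ℝ) + 1) ^ k * (r⁻¹) ^ m := by
  set T := (Finset.Nat.antidiagonalTuple k m).filter fun l => ∀ i, Even (l i) with hT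
  have hcard : T.card ≤ (m + 1) ^ k := by
    have hsub : T ⊆ Fintype.piFinset fun _ : Fin k => Finset.range (m + 1) := by
      intro l hl
      rw [hT, Finset.mem_filter, Finset.Nat.mem_antidiagonalTuple] at hl
      rw [Fintype.mem_piFinset]
      intro i
      rw [Finset.mem_range, Nat.lt_succ_iff, ← hl.1]
      exact Finset.single_le_sum (f := fun i => l i) (fun _ _ => Nat.zero_le _) (mem_univ i)
    calc _ ≤ (Fintype.piFinset fun _ : Fin k => Finset.range (m + 1)).card :=
          Finset.card_le_card hsub
      _ = (m + 1) ^ k := by simp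
  have hterm : ∀ l ∈ T, ‖∏ i, (w i ^ (l i))⁻¹‖ ≤ (r⁻¹) ^ m := by
    intro l hl
    rw [hT, Finset.mem_filter, Finset.Nat.mem_antidiagonalTuple] at hl
    rw [norm_prod]
    calc ∏ i, ‖(w i ^ l i)⁻¹‖ ≤ ∏ i, (r⁻¹) ^ (l i) := by
          apply Finset.prod_le_prod (fun _ _ => norm_nonneg _)
          intro i _
          rw [norm_inv, norm_pow, ← inv_pow]
          apply pow_le_pow_left₀ (by positivity)
          exact inv_anti₀ hr (hw i)
      _ = (r⁻¹) ^ m := by rw [Finset.prod_pow_eq_pow_sum, hl.1]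
  calc ‖sqS k m w‖ ≤ ∑ _l ∈ T, (r⁻¹) ^ m := (norm_sum_le _ _).trans (Finset.sum_le_sum hterm)
    _ = (T.card : ℝ) * (r⁻¹) ^ m := by rw [Finset.sum_const, nsmul_eq_mul]
    _ ≤ ((m : ℝ) + 1) ^ k * (r⁻¹) ^ m := by
        apply mul_le_mul_of_nonneg_right _ (by positivity)
        calc (T.card : ℝ) ≤ (((m + 1) ^ k : ℕ) : ℝ) := by exact_mod_cast hcard
          _ = ((m : ℝ) + 1) ^ k := by push_cast; ring

lemma summable_norm_sqS (k : ℕ) (w : Fin k → ℂ) (hw : ∀ i, w i ≠ 0) {z : ℂ}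
    (hz : ∀ i, ‖z‖ < ‖w i‖) :
    Summable fun m => ‖(∏ i, (w i ^ 2)⁻¹) * sqS k m w * z ^ m‖ := by
  rcases Nat.eq_zero_or_pos k with rfl | hk
  · apply summable_of_ne_finset_zero (s := {0})
    intro m hm
    simp only [Finset.mem_singleton] at hm
    rcases m with _ | m
    · exact absurd rfl hm
    · rw [sqS, Finset.Nat.antidiagonalTuple_zero_succ]
      simp
  · have hne : (Finset.univ : Finset (Fin k)).Nonempty := by
      have : Nonempty (Fin k) := Fin.pos_iff_nonempty.1 hk
      exact Finset.univ_nonempty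
    set r := Finset.univ.inf' hne fun i => ‖w i‖ with hrdef
    have hr0 : 0 < r := by
      rw [hrdef, Finset.lt_inf'_iff]
      exact fun i _ => norm_pos_iff.2 (hw i)
    have hrle : ∀ i, r ≤ ‖w i‖ := fun i => Finset.inf'_le _ (mem_univ i)
    have hzr : ‖z‖ < r := by
      rw [hrdef, Finset.lt_inf'_iff]
      exact fun i _ => hz i
    have hx0 : (0:ℝ) ≤ ‖z‖ / r := by positivity
    have hx1 : ‖z‖ / r < 1 := (div_lt_one hr0).2 hzr
    refine Summable.of_nonneg_of_le (fun m => norm_nonneg _) (fun m => ?_)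
      ((aux_summable k hx0 hx1).mul_left ‖∏ i, (w i ^ 2)⁻¹‖)
    rw [norm_mul, norm_mul, norm_pow, mul_assoc]
    apply mul_le_mul_of_nonneg_left _ (norm_nonneg _)
    calc ‖sqS k m w‖ * ‖z‖ ^ m ≤ (((m:ℝ)+1)^k * (r⁻¹)^m) * ‖z‖ ^ m := by
          apply mul_le_mul_of_nonneg_right (norm_sqS_le k m w hr0 hrle) (by positivity)
      _ = ((m:ℝ)+1)^k * (‖z‖ / r) ^ m := by
          rw [div_pow, div_eq_mul_inv, inv_pow]
          ring
lemma geomFactor {w0 z : ℂ} (hw : w0 ≠ 0) (hz : ‖z‖ < ‖w0‖) :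
    HasSum (fun m => (if Even m then (w0 ^ (m + 2))⁻¹ else 0) * z ^ m) ((w0 ^ 2 - z ^ 2)⁻¹) := by
  have hlt : ‖(z / w0) ^ 2‖ < 1 := by
    rw [norm_pow, norm_div]
    have h1 : ‖z‖ / ‖w0‖ < 1 := (div_lt_one (lt_of_le_of_lt (norm_nonneg z) hz)).2 hz
    calc (‖z‖ / ‖w0‖) ^ 2 ≤ (‖z‖/‖w0‖) ^ 1 := by
          apply pow_le_pow_of_le_one (by positivity) h1.le (by norm_num)
      _ < 1 := by simpa using h1
  have hgeo := (hasSum_geometric_of_norm_lt_one hlt).mul_left ((w0 ^ 2)⁻¹)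
  have hval : (w0 ^ 2)⁻¹ * (1 - (z / w0) ^ 2)⁻¹ = (w0 ^ 2 - z ^ 2)⁻¹ := by
    rw [← mul_inv]
    congr 1
    field_simp
  rw [hval] at hgeo
  have hterm : ∀ j : ℕ,
      (w0 ^ 2)⁻¹ * ((z / w0) ^ 2) ^ j
      = ((fun m => (if Even m then (w0 ^ (m + 2))⁻¹ else 0) * z ^ m) ∘ fun j => 2 * j) j := by
    intro j
    simp only [Function.comp_apply, if_pos (even_two_mul j)]
    have h2 : ((z / w0) ^ 2) ^ j = z ^ (2 * j) * (w0 ^ (2 * j))⁻¹ := by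
      rw [← pow_mul, div_pow, div_eq_mul_inv]
    rw [h2, pow_add, mul_inv]
    ring
  have hinj : Function.Injective (fun j : ℕ => 2 * j) := fun a b h => by simpa using h
  refine (hinj.hasSum_iff ?_).1 (hgeo.congr_fun fun j => (hterm j).symm)
  intro x hx
  have hne : ¬ Even x := by
    rintro ⟨c, rfl⟩
    exact hx ⟨c, show 2 * c = c + c by omega⟩
  rw [if_neg hne, zero_mul]
lemma sqS_zero (m : ℕ) (w : Fin 0 → ℂ) : sqS 0 m w = if m = 0 then 1 else 0 := by
  rcases m with _ | m
  · rw [sqS, Finset.Nat.antidiagonalTuple_zero_zero]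
    simp
  · rw [sqS, Finset.Nat.antidiagonalTuple_zero_succ]
    simp

lemma sqS_succ (k n : ℕ) (w : Fin (k + 1) → ℂ) :
    sqS (k + 1) n w = ∑ p ∈ Finset.HasAntidiagonal.antidiagonal n,
      (if Even p.1 then (w 0 ^ p.1)⁻¹ else 0) * sqS k p.2 (Fin.tail w) := by
  have hstep : ∀ p : ℕ × ℕ,
      (if Even p.1 then (w 0 ^ p.1)⁻¹ else 0) * sqS k p.2 (Fin.tail w)
      = if Even p.1 then (w 0 ^ p.1)⁻¹ * sqS k p.2 (Fin.tail w) else 0 := by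
    intro p; split <;> simp
  simp_rw [hstep]
  rw [Finset.sum_ite, Finset.sum_const_zero, add_zero]
  simp_rw [sqS, Finset.mul_sum]
  rw [Finset.sum_sigma']
  refine Finset.sum_nbij' (fun x => ⟨(x 0, ∑ i, Fin.tail x i), Fin.tail x⟩)
    (fun y => Fin.cons y.1.1 y.2) ?_ ?_ ?_ ?_ ?_
  · intro l hl
    simp only [Finset.mem_filter, Finset.Nat.mem_antidiagonalTuple] at hl
    simp only [Finset.mem_sigma, Finset.mem_filter, Finset.HasAntidiagonal.mem_antidiagonal,
      Finset.Nat.mem_antidiagonalTuple]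
    refine ⟨⟨?_, hl.2 0⟩, trivial, fun i => hl.2 i.succ⟩
    rw [← hl.1, Fin.sum_univ_succ]
    rfl
  · intro y hy
    simp only [Finset.mem_sigma, Finset.mem_filter, Finset.HasAntidiagonal.mem_antidiagonal,
      Finset.Nat.mem_antidiagonalTuple] at hy
    simp only [Finset.mem_filter, Finset.Nat.mem_antidiagonalTuple]
    constructor
    · rw [Fin.sum_univ_succ, Fin.cons_zero]
      simp only [Fin.cons_succ]
      rw [hy.2.1, hy.1.1]
    · intro i
      refine Fin.cases ?_ ?_ i
      · rw [Fin.cons_zero]; exact hy.1.2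
      · intro j; rw [Fin.cons_succ]; exact hy.2.2 j
  · intro l hl
    exact Fin.cons_self_tail l
  · intro y hy
    simp only [Finset.mem_sigma, Finset.mem_filter, Finset.HasAntidiagonal.mem_antidiagonal,
      Finset.Nat.mem_antidiagonalTuple] at hy
    refine Sigma.ext ?_ ?_
    · simp only [Fin.cons_zero, Fin.tail_cons]
      exact Prod.ext rfl hy.2.1
    · exact HEq.rfl
  · intro l hl
    rw [Fin.prod_univ_succ]
    rfl

lemma key (k : ℕ) (w : Fin k → ℂ) (hw : ∀ i, w i ≠ 0) {z : ℂ}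
    (hz : ∀ i, ‖z‖ < ‖w i‖) :
    HasSum (fun m => (∏ i, (w i ^ 2)⁻¹) * sqS k m w * z ^ m)
      (∏ i, (w i ^ 2 - z ^ 2)⁻¹) := by
  induction k with
  | zero =>
    have h := hasSum_ite_eq (0 : ℕ) (1 : ℂ)
    simp only [Finset.univ_eq_empty, Finset.prod_empty]
    refine h.congr_fun fun m => ?_
    rcases m with _ | m <;> simp [sqS_zero]
  | succ k ih =>
    have h0 := geomFactor (hw 0) (hz 0)
    have ht := ih (Fin.tail w) (fun i => hw i.succ) (fun i => hz i.succ)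
    have hd : Summable fun m => ‖(if Even m then ((w 0) ^ (m + 2))⁻¹ else 0) * z ^ m‖ := by
      have hw0 : (0:ℝ) < ‖w 0‖ := norm_pos_iff.2 (hw 0)
      have hx1 : ‖z‖ / ‖w 0‖ < 1 := (div_lt_one hw0).2 (hz 0)
      refine Summable.of_nonneg_of_le (fun m => norm_nonneg _) (fun m => ?_)
        (((summable_geometric_of_lt_one (by positivity) hx1)).mul_left ((‖w 0‖ ^ 2)⁻¹))
      rw [norm_mul, norm_pow]
      split
      · rw [norm_inv, norm_pow, pow_add, mul_inv, div_pow, div_eq_mul_inv]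
        apply le_of_eq
        ring
      · simp [norm_nonneg]
        positivity
    have hc : Summable fun m => ‖(∏ i, (Fin.tail w i ^ 2)⁻¹) * sqS k m (Fin.tail w) * z ^ m‖ :=
      summable_norm_sqS k (Fin.tail w) (fun i => hw i.succ) (fun i => hz i.succ)
    have hprod := tsum_mul_tsum_eq_tsum_sum_antidiagonal_of_summable_norm hd hc
    have hsconv := (summable_norm_sum_mul_antidiagonal_of_summable_norm hd hc).of_norm
    have hcauchy : HasSum
        (fun n => ∑ p ∈ Finset.HasAntidiagonal.antidiagonal n,
          ((if Even p.1 then ((w 0) ^ (p.1 + 2))⁻¹ else 0) * z ^ p.1) *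
          ((∏ i, (Fin.tail w i ^ 2)⁻¹) * sqS k p.2 (Fin.tail w) * z ^ p.2))
        ((w 0 ^ 2 - z ^ 2)⁻¹ * ∏ i, (Fin.tail w i ^ 2 - z ^ 2)⁻¹) := by
      rw [Summable.hasSum_iff hsconv, ← h0.tsum_eq, ← ht.tsum_eq]
      exact hprod.symm
    rw [Fin.prod_univ_succ fun i => (w i ^ 2 - z ^ 2)⁻¹]
    refine hcauchy.congr_fun fun n => ?_
    rw [sqS_succ, Fin.prod_univ_succ fun i => (w i ^ 2)⁻¹, Finset.mul_sum,
      Finset.sum_mul]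
    refine Finset.sum_congr rfl fun p hp => ?_
    rw [Finset.HasAntidiagonal.mem_antidiagonal] at hp
    simp only [Fin.tail]
    by_cases hev : Even p.1
    · rw [if_pos hev, if_pos hev, ← hp, pow_add, pow_add]
      ring
    · rw [if_neg hev, if_neg hev]
      ring

/-- for integers `n ≥ 0`, `k ≥ 1`, `N ∈ ℂ` and nonzero `w_1, …, w_k ∈ ℂ`,
the `n`-th derivative at `α = 0` of `α ↦ e^{−Nα}/∏_i (w_i² − α²)` equals
`(∏_i w_i^{−2}) ∑_{m=0}^n (n choose m)(−N)^{n−m} m! ∑_{l_1+⋯+l_k=m, l_j even} ∏_i w_i^{−l_i}`. -/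
theorem stmt_8 (n k : ℕ) (hk : 1 ≤ k) (N : ℂ) (w : Fin k → ℂ) (hw : ∀ i, w i ≠ 0) :
    iteratedDeriv n (fun α : ℂ => Complex.exp (-N * α) / ∏ i, (w i ^ 2 - α ^ 2)) 0 =
      (∏ i, (w i ^ 2)⁻¹) *
        ∑ m ∈ Finset.range (n + 1),
          (n.choose m : ℂ) * (-N) ^ (n - m) * (m ! : ℂ) *
            ∑ l ∈ (Finset.Nat.antidiagonalTuple k m).filter fun l => ∀ i, Even (l i),
              ∏ i, (w i ^ (l i))⁻¹ := by
  haveI : Nonempty (Fin k) := ⟨⟨0, hk⟩⟩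
  set f : ℂ → ℂ := fun α : ℂ => Complex.exp (-N * α) / ∏ i, (w i ^ 2 - α ^ 2) with hf
  set r : ℝ := Finset.univ.inf' Finset.univ_nonempty fun i => ‖w i‖ with hrdef
  have hr0 : 0 < r := by
    rw [hrdef, Finset.lt_inf'_iff]
    exact fun i _ => norm_pos_iff.2 (hw i)
  have hrle : ∀ i, r ≤ ‖w i‖ := fun i => Finset.inf'_le _ (Finset.mem_univ i)
  set a : ℕ → ℂ := fun n => ∑ p ∈ Finset.HasAntidiagonal.antidiagonal n,
    ((-N) ^ p.1 / (p.1)!) * ((∏ i, (w i ^ 2)⁻¹) * sqS k p.2 w) with hadef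
  -- main claim
  have claim : ∀ z : ℂ, ‖z‖ < r →
      (Summable fun m => ‖a m * z ^ m‖) ∧ HasSum (fun m => a m * z ^ m) (f z) := by
    intro z hz
    have hzi : ∀ i, ‖z‖ < ‖w i‖ := fun i => lt_of_lt_of_le hz (hrle i)
    have hkey := key k w hw hzi
    have hc : Summable fun m => ‖(∏ i, (w i ^ 2)⁻¹) * sqS k m w * z ^ m‖ :=
      summable_norm_sqS k w hw hzi
    have hexp : HasSum (fun j => ((-N) ^ j / (j)!) * z ^ j) (Complex.exp (-N * z)) := by
      have h := NormedSpace.expSeries_div_hasSum_exp (-N * z)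
      rw [← Complex.exp_eq_exp_ℂ] at h
      refine h.congr_fun fun j => ?_
      rw [mul_pow]
      ring
    have he : Summable fun j => ‖((-N) ^ j / (j)!) * z ^ j‖ := by
      have h := NormedSpace.norm_expSeries_div_summable (-N * z)
      refine h.congr fun j => ?_
      congr 1
      rw [mul_pow]
      ring
    have hprod := tsum_mul_tsum_eq_tsum_sum_antidiagonal_of_summable_norm he hc
    have hsnorm := summable_norm_sum_mul_antidiagonal_of_summable_norm he hc
    have hsconv := hsnorm.of_norm
    have hterm : ∀ m : ℕ, (∑ p ∈ Finset.HasAntidiagonal.antidiagonal m,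
        (((-N) ^ p.1 / (p.1)!) * z ^ p.1) *
          ((∏ i, (w i ^ 2)⁻¹) * sqS k p.2 w * z ^ p.2)) = a m * z ^ m := by
      intro m
      rw [hadef, Finset.sum_mul]
      refine Finset.sum_congr rfl fun p hp => ?_
      rw [Finset.HasAntidiagonal.mem_antidiagonal] at hp
      rw [← hp, pow_add]
      ring
    have hfz : f z = Complex.exp (-N * z) * ∏ i, (w i ^ 2 - z ^ 2)⁻¹ := by
      show Complex.exp (-N * z) / ∏ i, (w i ^ 2 - z ^ 2) = _
      rw [div_eq_mul_inv, ← Finset.prod_inv_distrib]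
    constructor
    · exact (hsnorm.congr fun m => by rw [hterm m])
    · rw [Summable.hasSum_iff (hsconv.congr fun m => hterm m)]
      have := (tsum_congr (L := SummationFilter.unconditional ℕ) hterm).symm
      rw [this, ← hprod, hexp.tsum_eq, hkey.tsum_eq, hfz]
  -- power series
  set p : FormalMultilinearSeries ℂ ℂ ℂ := FormalMultilinearSeries.ofScalars ℂ a with hpdef
  have hball : HasFPowerSeriesOnBall f p 0 (ENNReal.ofReal r) := by
    refine ⟨?_, ENNReal.ofReal_pos.2 hr0, ?_⟩
    · apply ENNReal.le_of_forall_nnreal_lt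
      intro t ht
      have htr : (t : ℝ) < r := by
        rw [ENNReal.lt_ofReal_iff_toReal_lt ENNReal.coe_ne_top] at ht
        simpa using ht
      apply p.le_radius_of_summable
      have hzt : ‖((t : ℝ) : ℂ)‖ < r := by
        simpa using htr
      have hsum := (claim ((t : ℝ) : ℂ) hzt).1
      refine hsum.congr fun m => ?_
      rw [norm_mul, norm_pow, hpdef, FormalMultilinearSeries.ofScalars_norm]
      congr 1
      simp
    · intro y hy
      have hy' : ‖y‖ < r := by
        rw [EMetric.mem_ball, edist_zero_right, ← ofReal_norm] at hy
        exact (ENNReal.ofReal_lt_ofReal_iff hr0).1 hy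
      have := (claim y hy').2
      rw [zero_add]
      refine this.congr_fun fun m => ?_
      rw [hpdef, FormalMultilinearSeries.ofScalars_apply_eq, smul_eq_mul]
  -- extract derivative
  have hder : iteratedDeriv n f 0 = (n ! : ℂ) * a n := by
    have hfd := hball.factorial_smul (1 : ℂ) n
    rw [iteratedDeriv_eq_iteratedFDeriv, ← hfd, hpdef,
      FormalMultilinearSeries.ofScalars_apply_eq, one_pow, smul_eq_mul, mul_one,
      nsmul_eq_mul]
  rw [hder]
  -- final algebra
  simp only [hadef]
  rw [Finset.Nat.sum_antidiagonal_eq_sum_range_succ_mk]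
  rw [← Finset.sum_range_reflect]
  rw [Finset.mul_sum, Finset.mul_sum]
  refine Finset.sum_congr rfl fun m hm => ?_
  rw [Finset.mem_range, Nat.lt_succ_iff] at hm
  have hmn : n - (n - m) = m := Nat.sub_sub_self hm
  simp only [Nat.succ_sub_one, hmn]
  have hfact : (n ! : ℂ) = (n.choose m : ℂ) * (m ! : ℂ) * ((n - m)! : ℂ) := by
    exact_mod_cast (Nat.choose_mul_factorial_mul_factorial hm).symm
  have hne : ((n - m)! : ℂ) ≠ 0 := Nat.cast_ne_zero.2 (Nat.factorial_ne_zero _)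
  have h2 : (n ! : ℂ) * ((-N) ^ (n - m) / ((n - m)! : ℂ))
      = (n.choose m : ℂ) * (m ! : ℂ) * (-N) ^ (n - m) := by
    rw [hfact]
    field_simp
  calc (n ! : ℂ) * ((-N) ^ (n - m) / ((n - m)! : ℂ) * ((∏ i, (w i ^ 2)⁻¹) * sqS k m w))
      = ((n ! : ℂ) * ((-N) ^ (n - m) / ((n - m)! : ℂ))) * ((∏ i, (w i ^ 2)⁻¹) * sqS k m w) := by
        ring
    _ = _ := by rw [h2, sqS]; ring
end

section
/- Let k ≥ 1 be an integer, let m_1, …, m_k be integers, and let N > 0 be real. Then (1/(2πi))^k ∮_{|w_1|=1} ⋯ ∮_{|w_k|=1} Δ(w) Δ(w²) e^{N∑_{i=1}^k w_i} · ( ∏_{j=1}^k w_j^{−(2k+m_j)} ) dw_1 ⋯ dw_k = ∑_{μ ∈ S_k} det_{k×k}( N^{2k + m_{μ(i)} − 2i − j + 2} / Γ(2k + m_{μ(i)} − 2i − j + 3) ), where in the determinant i, j range from 1 to k, and an entry is taken to be 0 whenever 2k + m_{μ(i)} − 2i − j + 3 is a non-positive integer (i.e. 1/Γ vanishes at the non-positive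 integers). -/
open scoped Nat
open Complex Metric Finset

/-! ### Auxiliary lemmas -/

section Aux

lemma contOn_exp_zpow (a : ℂ) (p : ℤ) :
    ContinuousOn (fun z : ℂ => Complex.exp (a * z) * z ^ p) (sphere (0:ℂ) 1) := by
  intro z hz
  have hz0 : z ≠ 0 := by
    simp only [mem_sphere_zero_iff_norm] at hz
    intro h; rw [h] at hz; simp at hz
  exact (((Complex.continuous_exp.comp (continuous_const.mul continuous_id)).continuousAt).mul
    (continuousAt_zpow₀ z p (Or.inl hz0))).continuousWithinAt

lemma cg_exp_zpow (a : ℂ) (p q : ℤ) (h : p = q) :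
    (∮ z in C(0,1), Complex.exp (a * z) * z ^ p)
      = ∮ z in C(0,1), Complex.exp (a * z) * z ^ q := by rw [h]

lemma cint_exp_zpow_neg (a : ℂ) : ∀ n : ℕ,
    (∮ z in C(0, 1), Complex.exp (a * z) * z ^ (-(n+1) : ℤ))
      = (2 * Real.pi * Complex.I) * a ^ n / n ! := by
  intro n
  induction n with
  | zero =>
    have hd : Differentiable ℂ (fun z : ℂ => Complex.exp (a * z)) := by fun_prop
    have h := (hd.diffContOnCl (s := ball (0:ℂ) 1)).circleIntegral_sub_inv_smul (w := 0)
      (by simp)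
    simp only [sub_zero, smul_eq_mul] at h
    rw [circleIntegral.integral_congr (by norm_num : (0:ℝ) ≤ 1)
      (g := fun z => z⁻¹ * Complex.exp (a * z)) (fun z _ => by norm_num [mul_comm]), h]
    simp
  | succ n ih =>
    have key : (∮ z in C(0,1), (a * (Complex.exp (a*z) * z ^ (-(n+1):ℤ))
        - ((n:ℂ)+1) * (Complex.exp (a*z) * z ^ ((-(n+1):ℤ) - 1)))) = 0 := by
      apply circleIntegral.integral_eq_zero_of_hasDerivWithinAt (f := fun z =>
        Complex.exp (a*z) * z ^ (-(n+1):ℤ)) (by norm_num)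
      intro z hz
      have hz0 : z ≠ 0 := by
        simp only [mem_sphere_zero_iff_norm] at hz
        intro h; rw [h] at hz; simp at hz
      have h1 : HasDerivAt (fun z : ℂ => Complex.exp (a*z)) (a * Complex.exp (a*z)) z := by
        simpa [mul_comm, Function.comp_def] using (Complex.hasDerivAt_exp (a*z)).comp z
          ((hasDerivAt_id z).const_mul a)
      have h2 := hasDerivAt_zpow (-(n+1) : ℤ) z (Or.inl hz0)
      have h3 : HasDerivAt (fun z => Complex.exp (a*z) * z ^ (-(n+1):ℤ)) _ z := h1.mul h2
      apply HasDerivAt.hasDerivWithinAt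
      refine h3.congr_deriv ?_
      push_cast
      ring
    rw [circleIntegral.integral_sub (f := fun z => a * (Complex.exp (a*z) * z ^ (-(n+1):ℤ)))
        (g := fun z => ((n:ℂ)+1) * (Complex.exp (a*z) * z ^ ((-(n+1):ℤ) - 1)))
        ((continuousOn_const.mul (contOn_exp_zpow a _)).circleIntegrable (by norm_num))
        ((continuousOn_const.mul (contOn_exp_zpow a _)).circleIntegrable (by norm_num)),
      circleIntegral.integral_const_mul, circleIntegral.integral_const_mul, ih,
      sub_eq_zero] at key
    rw [cg_exp_zpow a _ ((-(n+1):ℤ) - 1) (by push_cast; ring)]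
    have hn1 : ((n:ℂ)+1) ≠ 0 := Nat.cast_add_one_ne_zero n
    have hfac : ((n ! : ℂ)) ≠ 0 := Nat.cast_ne_zero.2 (Nat.factorial_ne_zero n)
    have hJ : (∮ z in C(0,1), Complex.exp (a*z) * z ^ ((-(n+1):ℤ) - 1))
        = a * (2 * Real.pi * Complex.I * a ^ n / n !) / ((n:ℂ)+1) := by
      rw [eq_div_iff hn1]; linear_combination -key
    rw [hJ, Nat.factorial_succ]
    push_cast
    field_simp
    ring

lemma cint_exp_zpow_nonneg (a : ℂ) (p : ℤ) (hp : 0 ≤ p) :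
    (∮ z in C(0, 1), Complex.exp (a * z) * z ^ p) = 0 := by
  have hd : Differentiable ℂ (fun z : ℂ => Complex.exp (a * z) * z ^ p) := by
    intro z
    exact ((Complex.differentiable_exp.comp ((differentiable_const a).mul
      differentiable_id)) z).mul (differentiableAt_zpow.2 (Or.inr hp))
  exact circleIntegral_eq_zero_of_differentiable_on_off_countable (by norm_num : (0:ℝ) ≤ 1)
    Set.countable_empty hd.continuous.continuousOn (fun z _ => hd z)

lemma cint_key (a : ℂ) (p : ℤ) :
    (2 * (Real.pi:ℂ) * Complex.I)⁻¹ * (∮ z in C(0,1), Complex.exp (a * z) * z ^ p)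
      = a ^ (-p - 1) / Complex.Gamma ((-p : ℤ) : ℂ) := by
  have h2pi : (2 * (Real.pi:ℂ) * Complex.I) ≠ 0 := by
    simp [Real.pi_ne_zero, Complex.I_ne_zero]
  rcases le_or_gt 0 p with hp | hp
  · rw [cint_exp_zpow_nonneg a p hp, mul_zero]
    have : ((-p : ℤ) : ℂ) = -(p.toNat : ℕ) := by
      push_cast; congr 1; exact_mod_cast (Int.toNat_of_nonneg hp).symm
    rw [this, Complex.Gamma_neg_nat_eq_zero, div_zero]
  · obtain ⟨n, hn⟩ : ∃ n : ℕ, p = -(n+1) := ⟨(-p-1).toNat, by omega⟩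
    subst hn
    rw [cg_exp_zpow a _ (-((n:ℕ)+1) : ℤ) (by push_cast; ring), cint_exp_zpow_neg a n]
    have h1 : (-(-((n:ℤ)+1)) - 1) = (n : ℤ) := by ring
    have h2 : ((-(-((n:ℤ)+1)) : ℤ) : ℂ) = (n : ℂ) + 1 := by push_cast; ring
    rw [h1, h2, Complex.Gamma_nat_eq_factorial, zpow_natCast]
    field_simp

lemma prod_Ioi_rev {k : ℕ} (f : Fin k → Fin k → ℂ) :
    (∏ i : Fin k, ∏ j ∈ Finset.Ioi i, f (Fin.rev j) (Fin.rev i))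
      = ∏ i : Fin k, ∏ j ∈ Finset.Ioi i, f i j := by
  rw [Finset.prod_sigma', Finset.prod_sigma']
  refine Finset.prod_nbij'
    (fun p : (Σ _ : Fin k, Fin k) => (⟨p.2.rev, p.1.rev⟩ : Σ _ : Fin k, Fin k))
    (fun p : (Σ _ : Fin k, Fin k) => (⟨p.2.rev, p.1.rev⟩ : Σ _ : Fin k, Fin k))
    ?_ ?_ ?_ ?_ ?_ <;>
    simp [Fin.rev_lt_rev, Fin.lt_rev_iff, Sigma.ext_iff]

lemma vand_expand {k : ℕ} (v : Fin k → ℂ) :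
    (∏ i : Fin k, ∏ j ∈ Finset.Ioi i, (v i - v j)) =
      ((Equiv.Perm.sign (Fin.revPerm : Equiv.Perm (Fin k)) : ℤ) : ℂ) *
        ∑ π : Equiv.Perm (Fin k),
          ((Equiv.Perm.sign π : ℤ) : ℂ) * ∏ i, v i ^ ((π i : ℕ)) := by
  have h1 : (∏ i : Fin k, ∏ j ∈ Finset.Ioi i, (v i - v j))
      = (Matrix.vandermonde (fun i => v i.rev)).det := by
    rw [Matrix.det_vandermonde]
    exact (prod_Ioi_rev (fun i j => v i - v j)).symm
  rw [h1, Matrix.det_apply, Finset.mul_sum]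
  refine Fintype.sum_equiv ((Equiv.inv (Equiv.Perm (Fin k))).trans
      (Equiv.mulRight (Fin.revPerm : Equiv.Perm (Fin k)))) _ _ (fun s => ?_)
  simp only [Equiv.trans_apply, Equiv.inv_apply, Equiv.coe_mulRight]
  have hprod : (∏ i, Matrix.vandermonde (fun i => v i.rev) (s i) i)
      = ∏ x, v x ^ (((s⁻¹ * Fin.revPerm : Equiv.Perm (Fin k)) x : Fin k) : ℕ) := by
    rw [← Equiv.prod_comp (s.trans Fin.revPerm)
      (fun x : Fin k => v x ^ (((s⁻¹ * Fin.revPerm : Equiv.Perm (Fin k)) x : Fin k) : ℕ))]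
    refine Finset.prod_congr rfl fun i _ => ?_
    simp [Matrix.vandermonde, Equiv.Perm.mul_apply]
  have hu : (Equiv.Perm.sign (Fin.revPerm : Equiv.Perm (Fin k)))
      * Equiv.Perm.sign (s⁻¹ * Fin.revPerm) = Equiv.Perm.sign s := by
    rw [Equiv.Perm.sign_mul, Equiv.Perm.sign_inv]
    rw [mul_comm (Equiv.Perm.sign s), ← mul_assoc, Int.units_mul_self, one_mul]
  have hs : ((Equiv.Perm.sign (Fin.revPerm : Equiv.Perm (Fin k)) : ℤ) : ℂ)
      * ((Equiv.Perm.sign (s⁻¹ * Fin.revPerm) : ℤ) : ℂ) = ((Equiv.Perm.sign s : ℤ) : ℂ) := by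
    have := congrArg (fun u : ℤˣ => ((u : ℤ) : ℂ)) hu
    push_cast at this
    exact this
  rw [hprod, Units.smul_def, zsmul_eq_mul, ← mul_assoc, hs]

end Aux

/-- The iterated contour integral
`(∮_{|w₁|=1} ⋯ ∮_{|w_k|=1} F(w₁,…,w_k) dw_k ⋯) dw₁`, each circle traversed once
counterclockwise. -/
noncomputable def multiCircleIntegral : (k : ℕ) → ((Fin k → ℂ) → ℂ) → ℂ
  | 0, F => F ![]
  | k + 1, F => ∮ z in C(0, 1), multiCircleIntegral k fun w => F (Fin.cons z w)

section Multi

lemma multi_congr : ∀ {k : ℕ} {F G : (Fin k → ℂ) → ℂ},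
    (∀ w : Fin k → ℂ, (∀ i, w i ∈ sphere (0:ℂ) 1) → F w = G w) →
    multiCircleIntegral k F = multiCircleIntegral k G := by
  intro k
  induction k with
  | zero =>
    intro F G h
    exact h ![] (fun i => i.elim0)
  | succ k ih =>
    intro F G h
    simp only [multiCircleIntegral]
    refine circleIntegral.integral_congr (by norm_num) (fun z hz => ?_)
    refine ih (fun w hw => h (Fin.cons z w) (fun i => ?_))
    refine Fin.cases ?_ ?_ i
    · simpa using hz
    · intro j; simpa using hw j

lemma circleIntegral_mul_const (f : ℂ → ℂ) (a : ℂ) :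
    (∮ z in C(0,1), f z * a) = (∮ z in C(0,1), f z) * a := by
  simpa [smul_eq_mul] using circleIntegral.integral_smul_const f a 0 1

lemma circleIntegral_finset_sum {ι : Type*} (s : Finset ι) (f : ι → ℂ → ℂ)
    (h : ∀ t ∈ s, CircleIntegrable (f t) 0 1) :
    (∮ z in C(0,1), ∑ t ∈ s, f t z) = ∑ t ∈ s, ∮ z in C(0,1), f t z := by
  simp only [circleIntegral]
  rw [← intervalIntegral.integral_finset_sum (fun t ht => (h t ht).out)]
  congr 1
  funext θ
  rw [Finset.smul_sum]

lemma multi_sum_prod : ∀ (k : ℕ) {T : Type*} [Fintype T] (c : T → ℂ)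
    (G : T → Fin k → ℂ → ℂ) (_ : ∀ t i, ContinuousOn (G t i) (sphere (0:ℂ) 1)),
    multiCircleIntegral k (fun w => ∑ t, c t * ∏ i, G t i (w i))
      = ∑ t, c t * ∏ i, ∮ z in C(0,1), G t i z := by
  intro k
  induction k with
  | zero =>
    intro T _ c G hG
    simp [multiCircleIntegral]
  | succ k ih =>
    intro T _ c G hG
    simp only [multiCircleIntegral]
    have hstep : ∀ z : ℂ, (multiCircleIntegral k fun w : Fin k → ℂ =>
        ∑ t, c t * ∏ i : Fin (k+1), G t i ((Fin.cons z w : Fin (k+1) → ℂ) i))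
        = ∑ t, (c t * G t 0 z) * ∏ i : Fin k, ∮ x in C(0,1), G t i.succ x := by
      intro z
      have := ih (fun t => c t * G t 0 z) (fun t i => G t i.succ) (fun t i => hG t i.succ)
      rw [← this]
      refine multi_congr (fun w _ => ?_)
      refine Finset.sum_congr rfl fun t _ => ?_
      rw [Fin.prod_univ_succ]
      simp [mul_assoc]
    calc (∮ z in C(0,1), multiCircleIntegral k fun w : Fin k → ℂ =>
            ∑ t, c t * ∏ i : Fin (k+1), G t i ((Fin.cons z w : Fin (k+1) → ℂ) i))
        = ∮ z in C(0,1), ∑ t, (c t * G t 0 z) * ∏ i : Fin k, ∮ x in C(0,1), G t i.succ x := by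
          exact circleIntegral.integral_congr (by norm_num) (fun z _ => hstep z)
      _ = ∑ t, ∮ z in C(0,1), (c t * G t 0 z) * ∏ i : Fin k, ∮ x in C(0,1), G t i.succ x := by
          refine circleIntegral_finset_sum _ _ (fun t _ => ?_)
          exact ((continuousOn_const.mul (hG t 0)).mul continuousOn_const).circleIntegrable
            (by norm_num)
      _ = ∑ t, c t * ∏ i : Fin (k+1), ∮ z in C(0,1), G t i z := by
          refine Finset.sum_congr rfl fun t _ => ?_
          have h1 : (fun z => (c t * G t 0 z) * ∏ i : Fin k, ∮ x in C(0,1), G t i.succ x)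
              = fun z => c t * ((fun z => G t 0 z * ∏ i : Fin k, ∮ x in C(0,1), G t i.succ x) z) := by
            funext z; ring
          rw [h1, circleIntegral.integral_const_mul, circleIntegral_mul_const,
            Fin.prod_univ_succ]

end Multi

section Integrand

lemma sq_cast_unit (u : ℤˣ) : ((u : ℤ) : ℂ) * ((u : ℤ) : ℂ) = 1 := by
  rcases Int.units_eq_one_or u with h | h <;> simp [h]

lemma integrand_expand {k : ℕ} (m : Fin k → ℤ) (N : ℝ) (w : Fin k → ℂ)
    (hw : ∀ i, w i ≠ 0) :
    (∏ i : Fin k, ∏ j ∈ Finset.Ioi i, (w i - w j)) *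
        (∏ i : Fin k, ∏ j ∈ Finset.Ioi i, (w i ^ 2 - w j ^ 2)) *
        Complex.exp ((N : ℂ) * ∑ i, w i) *
        (∏ j : Fin k, (w j ^ (2 * (k : ℤ) + m j))⁻¹)
      = ∑ t : Equiv.Perm (Fin k) × Equiv.Perm (Fin k),
          (((Equiv.Perm.sign t.1 : ℤ) : ℂ) * ((Equiv.Perm.sign t.2 : ℤ) : ℂ)) *
            ∏ i : Fin k, (Complex.exp ((N:ℂ) * w i) *
              w i ^ ((((t.1 i : Fin k) : ℕ) : ℤ) + 2 * (((t.2 i : Fin k) : ℕ) : ℤ)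
                - (2 * (k:ℤ) + m i))) := by
  have h2 := vand_expand (fun i => w i ^ 2)
  beta_reduce at h2
  rw [vand_expand w, h2, mul_mul_mul_comm,
    sq_cast_unit (Equiv.Perm.sign (Fin.revPerm : Equiv.Perm (Fin k))), one_mul,
    Fintype.sum_prod_type, Finset.sum_mul_sum]
  rw [Finset.sum_mul, Finset.sum_mul]
  refine Finset.sum_congr rfl fun π _ => ?_
  rw [Finset.sum_mul, Finset.sum_mul]
  refine Finset.sum_congr rfl fun τ _ => ?_
  have hexp : Complex.exp ((N:ℂ) * ∑ i, w i) = ∏ i : Fin k, Complex.exp ((N:ℂ) * w i) := by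
    rw [Finset.mul_sum, Complex.exp_sum]
  rw [hexp]
  have hP : (∏ i : Fin k, w i ^ ((π i : ℕ))) * (∏ i : Fin k, (w i ^ 2) ^ ((τ i : ℕ)))
      * ((∏ i : Fin k, Complex.exp ((N:ℂ) * w i))
      * (∏ j : Fin k, (w j ^ (2 * (k:ℤ) + m j))⁻¹))
      = ∏ i : Fin k, (Complex.exp ((N:ℂ) * w i) *
          w i ^ ((((π i : Fin k) : ℕ) : ℤ) + 2 * (((τ i : Fin k) : ℕ) : ℤ)
            - (2 * (k:ℤ) + m i))) := by
    rw [← Finset.prod_mul_distrib, ← Finset.prod_mul_distrib, ← Finset.prod_mul_distrib]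
    refine Finset.prod_congr rfl fun i _ => ?_
    have hzi := hw i
    rw [show ((((π i : Fin k):ℕ):ℤ) + 2*((((τ i : Fin k)):ℕ):ℤ) - (2*(k:ℤ)+m i))
      = ((((π i : Fin k) : ℕ) + 2*((τ i : Fin k) : ℕ) : ℕ) : ℤ) - (2*(k:ℤ)+m i) from by
        push_cast; ring]
    rw [zpow_sub₀ hzi, zpow_natCast, pow_add, pow_mul, div_eq_mul_inv]
    ring
  linear_combination (((Equiv.Perm.sign π : ℤ) : ℂ) * ((Equiv.Perm.sign τ : ℤ) : ℂ)) * hP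

end Integrand

set_option maxHeartbeats 1000000 in
/-- for an integer `k ≥ 1`, integers `m_1, …, m_k` and a real `N > 0`,
`(1/(2πi))^k ∮⋯∮ Δ(w)Δ(w²) e^{N∑w_i} ∏_j w_j^{−(2k+m_j)} dw
  = ∑_{μ ∈ S_k} det_{k×k}( N^{2k+m_{μ(i)}−2i−j+2} / Γ(2k+m_{μ(i)}−2i−j+3) )`,
with `1/Γ = 0` at non-positive integers (Mathlib's `Complex.Gamma` vanishes there).
Lean indices `i j : Fin k` correspond to `i+1, j+1 ∈ {1,…,k}`. -/
theorem stmt_12 (k : ℕ) (hk : 1 ≤ k) (m : Fin k → ℤ) (N : ℝ) (hN : 0 < N) :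
    ((2 * (Real.pi : ℂ) * Complex.I)⁻¹) ^ k *
        multiCircleIntegral k (fun w =>
          (∏ i : Fin k, ∏ j ∈ Finset.Ioi i, (w i - w j)) *
            (∏ i : Fin k, ∏ j ∈ Finset.Ioi i, (w i ^ 2 - w j ^ 2)) *
            Complex.exp ((N : ℂ) * ∑ i, w i) *
            ∏ j : Fin k, (w j ^ (2 * (k : ℤ) + m j))⁻¹) =
      ∑ μ : Equiv.Perm (Fin k),
        Matrix.det (Matrix.of fun i j : Fin k =>
          ((N : ℂ) ^ (2 * (k : ℤ) + m (μ i) - 2 * ((i : ℕ) : ℤ) - ((j : ℕ) : ℤ) - 1)) /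
            Complex.Gamma
              ((2 * (k : ℤ) + m (μ i) - 2 * ((i : ℕ) : ℤ) - ((j : ℕ) : ℤ) : ℤ) : ℂ)) := by
  classical
  -- the exponent
  set E : Equiv.Perm (Fin k) → Equiv.Perm (Fin k) → Fin k → ℤ := fun π τ i =>
    (((π i : Fin k) : ℕ) : ℤ) + 2 * (((τ i : Fin k) : ℕ) : ℤ) - (2 * (k:ℤ) + m i) with hE
  -- Step 1: expand the integrand on the torus
  have step1 : multiCircleIntegral k (fun w =>
      (∏ i : Fin k, ∏ j ∈ Finset.Ioi i, (w i - w j)) *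
        (∏ i : Fin k, ∏ j ∈ Finset.Ioi i, (w i ^ 2 - w j ^ 2)) *
        Complex.exp ((N : ℂ) * ∑ i, w i) *
        ∏ j : Fin k, (w j ^ (2 * (k : ℤ) + m j))⁻¹)
      = multiCircleIntegral k (fun w =>
        ∑ t : Equiv.Perm (Fin k) × Equiv.Perm (Fin k),
          (((Equiv.Perm.sign t.1 : ℤ) : ℂ) * ((Equiv.Perm.sign t.2 : ℤ) : ℂ)) *
            ∏ i : Fin k, (Complex.exp ((N:ℂ) * (w i)) * (w i) ^ (E t.1 t.2 i))) := by
    refine multi_congr (fun w hw => ?_)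
    have hw0 : ∀ i, w i ≠ 0 := by
      intro i
      have := hw i
      simp only [mem_sphere_zero_iff_norm] at this
      intro h; rw [h] at this; simp at this
    simpa [hE] using integrand_expand m N w hw0
  have key := multi_sum_prod k
    (fun t : Equiv.Perm (Fin k) × Equiv.Perm (Fin k) =>
      (((Equiv.Perm.sign t.1 : ℤ) : ℂ) * ((Equiv.Perm.sign t.2 : ℤ) : ℂ)))
    (fun (t : Equiv.Perm (Fin k) × Equiv.Perm (Fin k)) (i : Fin k) (z : ℂ) =>
      Complex.exp ((N:ℂ) * z) * z ^ (E t.1 t.2 i))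
    (fun t i => contOn_exp_zpow (N:ℂ) (E t.1 t.2 i))
  rw [step1, key, Finset.mul_sum]
  -- Step 2: evaluate the integrals
  have step2 : ∀ t : Equiv.Perm (Fin k) × Equiv.Perm (Fin k),
      ((2 * (Real.pi : ℂ) * Complex.I)⁻¹) ^ k *
        ((((Equiv.Perm.sign t.1 : ℤ) : ℂ) * ((Equiv.Perm.sign t.2 : ℤ) : ℂ)) *
          ∏ i : Fin k, ∮ z in C(0,1), Complex.exp ((N:ℂ) * z) * z ^ (E t.1 t.2 i))
      = (((Equiv.Perm.sign t.1 : ℤ) : ℂ) * ((Equiv.Perm.sign t.2 : ℤ) : ℂ)) *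
          ∏ i : Fin k, ((N:ℂ) ^ (-(E t.1 t.2 i) - 1)
            / Complex.Gamma ((-(E t.1 t.2 i) : ℤ) : ℂ)) := by
    intro t
    have : (∏ i : Fin k, ((N:ℂ) ^ (-(E t.1 t.2 i) - 1)
        / Complex.Gamma ((-(E t.1 t.2 i) : ℤ) : ℂ)))
        = ∏ i : Fin k, (((2 * (Real.pi : ℂ) * Complex.I)⁻¹) *
            ∮ z in C(0,1), Complex.exp ((N:ℂ) * z) * z ^ (E t.1 t.2 i)) := by
      exact Finset.prod_congr rfl fun i _ => (cint_key (N:ℂ) (E t.1 t.2 i)).symm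
    rw [this, Finset.prod_mul_distrib, Finset.prod_const, Finset.card_univ, Fintype.card_fin]
    ring
  rw [Finset.sum_congr rfl (fun t _ => step2 t)]
  -- Step 3: rewrite the right-hand side as a sum over pairs of permutations
  rw [Finset.sum_congr rfl (fun (μ : Equiv.Perm (Fin k)) _ => Matrix.det_apply (Matrix.of fun i j : Fin k =>
    ((N : ℂ) ^ (2 * (k : ℤ) + m (μ i) - 2 * ((i : ℕ) : ℤ) - ((j : ℕ) : ℤ) - 1)) /
      Complex.Gamma ((2 * (k : ℤ) + m (μ i) - 2 * ((i : ℕ) : ℤ) - ((j : ℕ) : ℤ) : ℤ) : ℂ)))]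
  -- Step 4: match the two sums via the bijection (π, τ) ↦ (μ, σ) = (τ⁻¹, τ * π⁻¹)
  refine Eq.trans ?_ (Fintype.sum_prod_type
    (f := fun p : Equiv.Perm (Fin k) × Equiv.Perm (Fin k) =>
      Equiv.Perm.sign p.2 • ∏ i : Fin k,
        ((N : ℂ) ^ (2 * (k : ℤ) + m (p.1 (p.2 i)) - 2 * (((p.2 i : Fin k) : ℕ) : ℤ)
            - ((i : ℕ) : ℤ) - 1)) /
          Complex.Gamma ((2 * (k : ℤ) + m (p.1 (p.2 i)) - 2 * (((p.2 i : Fin k) : ℕ) : ℤ)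
            - ((i : ℕ) : ℤ) : ℤ) : ℂ)))
  refine Fintype.sum_equiv
    (⟨fun t : Equiv.Perm (Fin k) × Equiv.Perm (Fin k) => (t.2⁻¹, t.2 * t.1⁻¹),
      fun p => ((p.1 * p.2)⁻¹, p.1⁻¹), by intro p; simp [mul_assoc], by
        intro p; simp [mul_assoc]⟩) _ _ (fun t => ?_)
  obtain ⟨π, τ⟩ := t
  simp only [Equiv.coe_fn_mk]
  -- signs agree
  have hsign : ((Equiv.Perm.sign π : ℤ) : ℂ) * ((Equiv.Perm.sign τ : ℤ) : ℂ)
      = ((Equiv.Perm.sign (τ * π⁻¹) : ℤ) : ℂ) := by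
    have hu : Equiv.Perm.sign π * Equiv.Perm.sign τ = Equiv.Perm.sign (τ * π⁻¹) := by
      rw [Equiv.Perm.sign_mul, Equiv.Perm.sign_inv, mul_comm]
    have := congrArg (fun u : ℤˣ => ((u : ℤ) : ℂ)) hu
    push_cast at this
    exact this
  -- products agree
  have hprod : (∏ i : Fin k, ((N:ℂ) ^ (-(E π τ i) - 1)
      / Complex.Gamma ((-(E π τ i) : ℤ) : ℂ)))
      = ∏ i : Fin k,
          ((N : ℂ) ^ (2 * (k : ℤ) + m (τ⁻¹ ((τ * π⁻¹) i)) - 2 * ((((τ * π⁻¹) i : Fin k) : ℕ) : ℤ)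
              - ((i : ℕ) : ℤ) - 1)) /
            Complex.Gamma ((2 * (k : ℤ) + m (τ⁻¹ ((τ * π⁻¹) i))
              - 2 * ((((τ * π⁻¹) i : Fin k) : ℕ) : ℤ) - ((i : ℕ) : ℤ) : ℤ) : ℂ) := by
    rw [← Equiv.prod_comp π (fun i : Fin k =>
      ((N : ℂ) ^ (2 * (k : ℤ) + m (τ⁻¹ ((τ * π⁻¹) i)) - 2 * ((((τ * π⁻¹) i : Fin k) : ℕ) : ℤ)
          - ((i : ℕ) : ℤ) - 1)) /
        Complex.Gamma ((2 * (k : ℤ) + m (τ⁻¹ ((τ * π⁻¹) i))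
          - 2 * ((((τ * π⁻¹) i : Fin k) : ℕ) : ℤ) - ((i : ℕ) : ℤ) : ℤ) : ℂ))]
    refine Finset.prod_congr rfl fun i _ => ?_
    simp only [Equiv.Perm.mul_apply, show ∀ x, τ⁻¹ (τ x) = x from τ.symm_apply_apply]
    congr 2
    · simp [hE]; ring
    · congr 1
      simp [hE]; ring
  rw [hsign, hprod, Units.smul_def, zsmul_eq_mul]
end

section
/- Let k ≥ 1 be an integer and let m_1, …, m_k be non-negative integers. Then det_{k×k}( 1/Γ(2k + m_i − 2i − j + 2) ) = ( ∏_{j=1}^k 1/(2k + m_j − 2j)! ) · ∏_{1≤i<j≤k} (m_j − m_i − 2j + 2i), where in the determinant i, j range from 1 to k, and 1/Γ(z) is taken to be 0 whenever z is a non-positive integer. -/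
open scoped Nat

open Polynomial in
private lemma stmt13_entry (a j : ℕ) :
    (Complex.Gamma (((a : ℤ) - j + 1 : ℤ) : ℂ))⁻¹ =
      ((a ! : ℕ) : ℂ)⁻¹ * (descPochhammer ℂ j).eval ((a : ℕ) : ℂ) := by
  rw [descPochhammer_eval_eq_descFactorial]
  rcases le_or_gt j a with h | h
  · have h1 : ((a : ℤ) - j + 1 : ℤ) = ((a - j : ℕ) : ℤ) + 1 := by push_cast [h]; ring
    rw [h1]
    push_cast
    rw [Complex.Gamma_nat_eq_factorial]
    have hfa : ((a ! : ℕ) : ℂ) ≠ 0 := Nat.cast_ne_zero.mpr (Nat.factorial_ne_zero a)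
    have hfd : (((a - j)! : ℕ) : ℂ) ≠ 0 := Nat.cast_ne_zero.mpr (Nat.factorial_ne_zero _)
    have key : (a.descFactorial j : ℕ) * ((a - j)! : ℕ) = (a ! : ℕ) := by
      rw [mul_comm]; exact Nat.factorial_mul_descFactorial h
    field_simp
    exact_mod_cast key.symm.trans (mul_comm _ _)
  · have h0 : Complex.Gamma (((a : ℤ) - j + 1 : ℤ) : ℂ) = 0 := by
      rw [Complex.Gamma_eq_zero_iff]
      have hz : ((a : ℤ) - j + 1) = -((j - a - 1 : ℕ) : ℤ) := by omega
      exact ⟨j - a - 1, by exact_mod_cast congrArg (Int.cast : ℤ → ℂ) hz⟩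
    rw [h0, inv_zero, Nat.descFactorial_eq_zero_iff_lt.mpr h]
    simp

/-- For `k ≥ 1` and non-negative integers `m_1, …, m_k`,
`det_{k×k}(1/Γ(2k + m_i − 2i − j + 2)) = (∏_{j=1}^k 1/(2k+m_j−2j)!) · ∏_{1≤i<j≤k}(m_j − m_i − 2j + 2i)`,
with the convention `1/Γ(z) = 0` at non-positive integers `z` (Mathlib's `Complex.Gamma`
vanishes at non-positive integers, so `(Complex.Gamma z)⁻¹ = 0` there).
Here the Lean indices `i j : Fin k` correspond to `i+1, j+1 ∈ {1,…,k}`. -/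
theorem stmt_13 (k : ℕ) (hk : 1 ≤ k) (m : Fin k → ℕ) :
    Matrix.det (Matrix.of fun i j : Fin k =>
        (Complex.Gamma ((2 * (k : ℤ) + (m i : ℤ) - 2 * ((i : ℕ) : ℤ) - ((j : ℕ) : ℤ) - 1 : ℤ) : ℂ))⁻¹) =
      (∏ j : Fin k, (((2 * k + m j - 2 * ((j : ℕ) + 1))! : ℕ) : ℂ)⁻¹) *
        ∏ i : Fin k, ∏ j ∈ Finset.Ioi i,
          ((m j : ℂ) - (m i : ℂ) - 2 * ((j : ℕ) : ℂ) + 2 * ((i : ℕ) : ℂ)) := by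
  set a : Fin k → ℕ := fun i => 2 * k + m i - 2 * ((i : ℕ) + 1) with ha
  have hle : ∀ i : Fin k, 2 * ((i : ℕ) + 1) ≤ 2 * k + m i := by
    intro i; have := i.2; omega
  have hcast : ∀ i : Fin k, ((a i : ℤ)) = 2 * (k : ℤ) + (m i : ℤ) - 2 * ((i : ℕ) : ℤ) - 2 := by
    intro i
    rw [ha]
    push_cast [Nat.cast_sub (hle i)]
    ring
  have hmat : (Matrix.of fun i j : Fin k =>
      (Complex.Gamma ((2 * (k : ℤ) + (m i : ℤ) - 2 * ((i : ℕ) : ℤ) - ((j : ℕ) : ℤ) - 1 : ℤ) : ℂ))⁻¹)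
      = Matrix.of (fun i j : Fin k => (((a i)! : ℕ) : ℂ)⁻¹ *
          (descPochhammer ℂ (j : ℕ)).eval ((a i : ℕ) : ℂ)) := by
    ext i j
    have harg : (2 * (k : ℤ) + (m i : ℤ) - 2 * ((i : ℕ) : ℤ) - ((j : ℕ) : ℤ) - 1 : ℤ)
        = ((a i : ℤ) - (j : ℕ) + 1 : ℤ) := by rw [hcast i]; ring
    simp only [Matrix.of_apply, harg]
    exact stmt13_entry (a i) (j : ℕ)
  rw [hmat]
  rw [Matrix.det_mul_column (fun i => (((a i)! : ℕ) : ℂ)⁻¹)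
    (fun i j : Fin k => (descPochhammer ℂ (j : ℕ)).eval ((a i : ℕ) : ℂ))]
  have hvdm : (Matrix.det fun i j : Fin k =>
      (descPochhammer ℂ (j : ℕ)).eval ((a i : ℕ) : ℂ))
      = (Matrix.vandermonde (fun i : Fin k => ((a i : ℕ) : ℂ))).det :=
    (Matrix.det_eval_matrixOfPolynomials_eq_det_vandermonde
      (fun i : Fin k => ((a i : ℕ) : ℂ)) (fun j => descPochhammer ℂ (j : ℕ))
      (fun i => descPochhammer_natDegree ℂ (i : ℕ))
      (fun i => monic_descPochhammer ℂ (i : ℕ))).symm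
  rw [hvdm, Matrix.det_vandermonde]
  congr 1
  refine Finset.prod_congr rfl fun i _ => Finset.prod_congr rfl fun j _ => ?_
  have h1 : ((a j : ℕ) : ℂ) = 2 * (k : ℂ) + (m j : ℂ) - 2 * ((j : ℕ) : ℂ) - 2 := by
    exact_mod_cast congrArg (Int.cast : ℤ → ℂ) (hcast j)
  have h2 : ((a i : ℕ) : ℂ) = 2 * (k : ℂ) + (m i : ℂ) - 2 * ((i : ℕ) : ℂ) - 2 := by
    exact_mod_cast congrArg (Int.cast : ℤ → ℂ) (hcast i)
  rw [h1, h2]; ring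
end
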